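/- For every p ∈ [0,1] and q ∈ (0,1), the Kullback–Leibler divergence between Bernoulli(p) and Bernoulli(q), namely D(p‖q) = p·log(p/q) + (1−p)·log((1−p)/(1−q)) with the convention 0·log 0 = 0, satisfies D(p‖q) ≤ 4(p−q)² / min(q, 1−q). -/
import Mathlib


/-- reverse Pinsker inequality for Bernoulli distributions:
for `p ∈ [0,1]` and `q ∈ (0,1)`, the Kullback–Leibler divergence
`D(p‖q) = p·log(p/q) + (1−p)·log((1−p)/(1−q))` (with `0·log 0 = 0`) satisfies
`D(p‖q) ≤ 4(p−q)²/min(q, 1−q)`. -/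
theorem reverse_pinsker_bernoulli
    (p q : ℝ) (hp : p ∈ Set.Icc (0 : ℝ) 1) (hq : q ∈ Set.Ioo (0 : ℝ) 1) :
    p * Real.log (p / q) + (1 - p) * Real.log ((1 - p) / (1 - q)) ≤
      4 * (p - q) ^ 2 / min q (1 - q) := by
  obtain ⟨hp0, hp1⟩ := hp
  obtain ⟨hq0, hq1⟩ := hq
  have hq1' : (0:ℝ) < 1 - q := by linarith
  have key : ∀ a b : ℝ, 0 ≤ a → 0 < b → a * Real.log (a / b) ≤ a * (a / b - 1) := by
    intro a b ha hb
    rcases eq_or_lt_of_le ha with h | h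
    · simp [← h]
    · exact mul_le_mul_of_nonneg_left
        (Real.log_le_sub_one_of_pos (div_pos h hb)) ha
  have h1 := key p q hp0 hq0
  have h2 := key (1 - p) (1 - q) (by linarith) hq1'
  have hsum : p * Real.log (p / q) + (1 - p) * Real.log ((1 - p) / (1 - q)) ≤
      (p - q) ^ 2 / (q * (1 - q)) := by
    have heq : p * (p / q - 1) + (1 - p) * ((1 - p) / (1 - q) - 1)
        = (p - q) ^ 2 / (q * (1 - q)) := by
      field_simp
      ring
    linarith [h1, h2, heq.le, heq.ge]
  refine hsum.trans ?_
  have hm : (0:ℝ) < min q (1 - q) := lt_min hq0 hq1'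
  rw [div_le_div_iff₀ (by positivity) hm]
  have hsq : (0:ℝ) ≤ (p - q) ^ 2 := sq_nonneg _
  rcases min_cases q (1 - q) with ⟨hmin, hle⟩ | ⟨hmin, hle⟩ <;> rw [hmin]
  · nlinarith [mul_nonneg (mul_nonneg hsq hq0.le) (show (0:ℝ) ≤ 3 - 4 * q by linarith)]
  · nlinarith [mul_nonneg (mul_nonneg hsq hq1'.le) (show (0:ℝ) ≤ 4 * q - 1 by linarith)]
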